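/- If a locally finite weighted graph satisfies CD(K,∞), then for any finitely supported f, the function u(t,x) = Γ(P_t f)(x) is a subsolution of the damped heat equation: (d/dt) Γ(P_t f) ≤ Δ Γ(P_t f) − 2K Γ(P_t f) pointwise for t > 0. -/

import Mathlib

open scoped BigOperators
open Filter

/-- The carré du champ operator. -/
noncomputable def gam {V : Type*} (m : V → ℝ) (μ : V → V → ℝ) (f g : V → ℝ) (x : V) : ℝ :=
  (1 / (2 * m x)) * ∑' y, μ x y * (f y - f x) * (g y - g x)

/-- The formal graph Laplacian. -/
noncomputable def lap {V : Type*} (m : V → ℝ) (μ : V → V → ℝ) (f : V → ℝ) (x : V) : ℝ :=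
  (1 / m x) * ∑' y, μ x y * (f y - f x)

/-- The Dirichlet energy `Q(f) = (1/2) ∑_{x,y} μ_{xy} (f y - f x)²`. -/
noncomputable def QN {V : Type*} (μ : V → V → ℝ) (f : V → ℝ) : ℝ :=
  (1 / 2) * ∑' p : V × V, μ p.1 p.2 * (f p.2 - f p.1) ^ 2

/-- The `ℓ²(V,m)` norm. -/
noncomputable def l2n {V : Type*} (m : V → ℝ) (f : V → ℝ) : ℝ :=
  Real.sqrt (∑' x, f x ^ 2 * m x)

/-- The iterated carré du champ `Γ₂(f) = (1/2) Δ Γ(f) - Γ(f, Δ f)`. -/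
noncomputable def gam2 {V : Type*} (m : V → ℝ) (μ : V → V → ℝ) (f : V → ℝ) (x : V) : ℝ :=
  (1 / 2) * lap m μ (fun y => gam m μ f f y) x - gam m μ f (lap m μ f) x


lemma gam_eq_sum' {V : Type*} (m : V → ℝ) (μ : V → V → ℝ)
    (hlf : ∀ x, (Function.support (μ x)).Finite) (f g : V → ℝ) (x : V) :
    gam m μ f g x = (1 / (2 * m x)) * ∑ y ∈ (hlf x).toFinset,
      μ x y * (f y - f x) * (g y - g x) := by
  unfold gam
  congr 1
  refine tsum_eq_sum (fun y hy => ?_)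
  have : μ x y = 0 := by
    by_contra h
    exact hy ((hlf x).mem_toFinset.mpr h)
  simp [this]

/-- Under `CD(K,∞)`, for finitely supported `f`, `Γ(P_t f)` is a subsolution of the damped
heat equation: `(d/dt) Γ(P_t f) ≤ Δ Γ(P_t f) - 2K Γ(P_t f)`. -/
theorem stmt11 {V : Type*} (m : V → ℝ) (μ : V → V → ℝ)
    (hm : ∀ x, 0 < m x) (hsym : ∀ x y, μ x y = μ y x)
    (hnn : ∀ x y, 0 ≤ μ x y) (hlf : ∀ x, (Function.support (μ x)).Finite)
    -- completeness of the graph: cut-off functions `η_k`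
    (η : ℕ → V → ℝ)
    (hηfin : ∀ k, (Function.support (η k)).Finite)
    (hηmono : ∀ k x, η k x ≤ η (k + 1) x)
    (hηlim : ∀ x, Tendsto (fun k => η k x) atTop (nhds 1))
    (hηgam : ∀ k x, 1 ≤ k → gam m μ (η k) (η k) x ≤ 1 / (k : ℝ))
    -- the heat semigroup `P t = e^{tΔ}` and its standard properties
    (P : ℝ → (V → ℝ) → V → ℝ)
    (hP0 : ∀ f, P 0 f = f)
    (hheat : ∀ (f : V → ℝ) (x : V) (t : ℝ), HasDerivAt (fun s => P s f x) (lap m μ (P t f) x) t)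
    (hPcomm : ∀ f : V → ℝ, (Function.support f).Finite → ∀ t, P t (lap m μ f) = lap m μ (P t f))
    (hPl2 : ∀ f : V → ℝ, Summable (fun x => f x ^ 2 * m x) → ∀ t, 0 ≤ t →
      Summable (fun x => (P t f x) ^ 2 * m x) ∧ ∑' x, (P t f x) ^ 2 * m x ≤ ∑' x, f x ^ 2 * m x)
    (hPsym : ∀ f g : V → ℝ, Summable (fun x => f x ^ 2 * m x) →
      Summable (fun x => g x ^ 2 * m x) → ∀ t, 0 ≤ t →
      ∑' x, P t f x * g x * m x = ∑' x, f x * P t g x * m x)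
    (hPpos : ∀ f : V → ℝ, (∀ x, 0 ≤ f x) → ∀ t, 0 ≤ t → ∀ x, 0 ≤ P t f x)
    -- the curvature dimension condition `CD(K,∞)`
    (K : ℝ) (hCD : ∀ (f : V → ℝ) (x : V), K * gam m μ f f x ≤ gam2 m μ f x) :
    ∀ f : V → ℝ, (Function.support f).Finite → ∀ t : ℝ, 0 < t → ∀ x : V,
      deriv (fun s => gam m μ (P s f) (P s f) x) t ≤
        lap m μ (fun y => gam m μ (P t f) (P t f) y) x -
          2 * K * gam m μ (P t f) (P t f) x := by
  intro f hf t ht x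
  set g := P t f with hg
  set S := (hlf x).toFinset with hS
  -- the time derivative of Γ(P_s f)(x)
  have hsum : HasDerivAt
      (fun s => ∑ y ∈ S, μ x y * (P s f y - P s f x) * (P s f y - P s f x))
      (∑ y ∈ S, μ x y * ((lap m μ g y - lap m μ g x) * (g y - g x)
        + (g y - g x) * (lap m μ g y - lap m μ g x))) t := by
    refine HasDerivAt.fun_sum (fun y _ => ?_)
    have hdiff : HasDerivAt (fun s => P s f y - P s f x)
        (lap m μ g y - lap m μ g x) t := (hheat f y t).sub (hheat f x t)
    have := (hdiff.mul hdiff).const_mul (μ x y)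
    simpa [mul_assoc, mul_add, mul_comm, mul_left_comm] using this
  have hd : HasDerivAt (fun s => gam m μ (P s f) (P s f) x)
      (2 * gam m μ g (lap m μ g) x) t := by
    have hrep : (fun s => gam m μ (P s f) (P s f) x)
        = fun s => (1 / (2 * m x)) * ∑ y ∈ S,
            μ x y * (P s f y - P s f x) * (P s f y - P s f x) := by
      funext s; exact gam_eq_sum' m μ hlf _ _ x
    rw [hrep]
    have := hsum.const_mul (1 / (2 * m x))
    refine this.congr_deriv ?_
    rw [gam_eq_sum' m μ hlf g (lap m μ g) x]
    rw [Finset.mul_sum, Finset.mul_sum, Finset.mul_sum]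
    refine Finset.sum_congr rfl (fun y _ => ?_)
    ring
  rw [hd.deriv]
  have hcd := hCD g x
  unfold gam2 at hcd
  linarith
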